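/- arXiv:1908.09965 — 5 statements merged into one kernel-verified Lean document; each statement's English description precedes it below -/
import Mathlib

section
/- For every integer n ≥ 1 and every ψ ∈ ℂ, there exists a nonzero point x ∈ ℂ^{n+2} at which all n+2 partial derivatives ∂f_ψ/∂X_i vanish simultaneously if and only if ψ^{n+2} = 1. (Equivalently, the projective hypersurface cut out by f_ψ is singular precisely when ψ^{n+2} = 1.) -/
open MvPolynomial Finset

lemma pderiv_prod_X_notmem {σ : Type*} (s : Finset σ) (i : σ) (h : i ∉ s) :
    pderiv i (∏ j ∈ s, (X j : MvPolynomial σ ℂ)) = 0 := by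
  classical
  induction s using Finset.induction with
  | empty => simp
  | @insert a t hj ih =>
    rw [Finset.prod_insert hj, pderiv_mul, ih (fun hm => h (Finset.mem_insert_of_mem hm)),
      pderiv_X_of_ne (by rintro rfl; exact h (Finset.mem_insert_self a t))]
    simp

lemma eval_form (n : ℕ) (ψ : ℂ) (x : Fin (n + 2) → ℂ) (i : Fin (n + 2)) :
    MvPolynomial.eval x (MvPolynomial.pderiv i
      ((∑ j : Fin (n + 2), MvPolynomial.X j ^ (n + 2)) -
        MvPolynomial.C (((n : ℂ) + 2) * ψ) * ∏ j : Fin (n + 2), MvPolynomial.X j)) =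
      ((n : ℂ) + 2) * (x i ^ (n + 1) - ψ * ∏ j ∈ Finset.univ.erase i, x j) := by
  classical
  have h1 : pderiv i (∑ j : Fin (n + 2), (X j : MvPolynomial (Fin (n+2)) ℂ) ^ (n + 2)) =
      ((n : MvPolynomial (Fin (n+2)) ℂ) + 2) * X i ^ (n + 1) := by
    rw [map_sum]
    rw [Finset.sum_eq_single i]
    · rw [pderiv_pow, pderiv_X_self]
      push_cast
      ring
    · intro j _ hji
      rw [pderiv_pow, pderiv_X_of_ne hji, mul_zero]
    · simp
  have h2 : pderiv i (∏ j : Fin (n + 2), (X j : MvPolynomial (Fin (n+2)) ℂ)) =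
      ∏ j ∈ Finset.univ.erase i, (X j : MvPolynomial (Fin (n+2)) ℂ) := by
    rw [← Finset.mul_prod_erase Finset.univ _ (Finset.mem_univ i), pderiv_mul,
      pderiv_prod_X_notmem _ _ (Finset.notMem_erase i _), pderiv_X_self]
    simp
  rw [map_sub, pderiv_C_mul, h1, h2, map_sub, map_mul, map_mul, eval_C, map_pow, eval_X,
    map_prod]
  simp only [eval_X, map_natCast, map_add, map_ofNat]
  ring

/-- The Fermat pencil polynomial `f_ψ` has a nonzero common zero of all its
partial derivatives if and only if `ψ^{n+2} = 1`, i.e. the projective hypersurface cut out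
by `f_ψ` is singular precisely when `ψ^{n+2} = 1`. -/
theorem fermat_pencil_singular_iff (n : ℕ) (hn : 1 ≤ n) (ψ : ℂ) :
    (∃ x : Fin (n + 2) → ℂ, x ≠ 0 ∧ ∀ i : Fin (n + 2),
        MvPolynomial.eval x (MvPolynomial.pderiv i
          ((∑ j : Fin (n + 2), MvPolynomial.X j ^ (n + 2)) -
            MvPolynomial.C (((n : ℂ) + 2) * ψ) * ∏ j : Fin (n + 2), MvPolynomial.X j)) = 0)
    ↔ ψ ^ (n + 2) = 1 := by
  have hn2 : ((n : ℂ) + 2) ≠ 0 := by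
    have : ((n + 2 : ℕ) : ℂ) ≠ 0 := Nat.cast_ne_zero.2 (by omega)
    push_cast at this
    exact this
  constructor
  · rintro ⟨x, hx0, hx⟩
    -- reduce to x i ^ (n+1) = ψ * ∏_{j ≠ i} x j
    have key : ∀ i : Fin (n + 2), x i ^ (n + 1) = ψ * ∏ j ∈ Finset.univ.erase i, x j := by
      intro i
      have := hx i
      rw [eval_form] at this
      rcases mul_eq_zero.1 this with h | h
      · exact absurd h hn2
      · linear_combination h
    have key2 : ∀ i : Fin (n + 2), x i ^ (n + 2) = ψ * ∏ j, x j := by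
      intro i
      calc x i ^ (n + 2) = x i * x i ^ (n + 1) := by ring
        _ = ψ * (x i * ∏ j ∈ Finset.univ.erase i, x j) := by rw [key i]; ring
        _ = ψ * ∏ j, x j := by rw [Finset.mul_prod_erase _ _ (Finset.mem_univ i)]
    set P : ℂ := ∏ j, x j with hP
    by_cases hPz : P = 0
    · exfalso
      apply hx0
      funext i
      have := key2 i
      rw [hPz, mul_zero, pow_eq_zero_iff (by omega)] at this
      simpa using this
    · have hprod : P ^ (n + 2) = ψ ^ (n + 2) * P ^ (n + 2) := by
        calc P ^ (n + 2) = ∏ j : Fin (n + 2), x j ^ (n + 2) := by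
              rw [← Finset.prod_pow]
          _ = ∏ _j : Fin (n + 2), (ψ * P) := by
              exact Finset.prod_congr rfl fun j _ => key2 j
          _ = (ψ * P) ^ (n + 2) := by
              rw [Finset.prod_const, Finset.card_univ, Fintype.card_fin]
          _ = ψ ^ (n + 2) * P ^ (n + 2) := by ring
      have hPpow : P ^ (n + 2) ≠ 0 := pow_ne_zero _ hPz
      field_simp at hprod
      exact hprod.symm
  · intro hψ
    have hψ0 : ψ ≠ 0 := by
      intro h; rw [h] at hψ; simp at hψ
    refine ⟨Function.update (fun _ => (1 : ℂ)) 0 (ψ ^ (n + 1)), ?_, ?_⟩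
    · intro h
      have := congrFun h 1
      rw [Function.update_of_ne (by simp [Fin.ext_iff]) _ _] at this
      simp at this
    · intro i
      rw [eval_form]
      rcases eq_or_ne i 0 with rfl | hi
      · have hp : ∏ j ∈ Finset.univ.erase (0 : Fin (n+2)), Function.update (fun _ => (1:ℂ)) 0 (ψ ^ (n + 1)) j = 1 := by
          apply Finset.prod_eq_one
          intro j hj
          rw [Function.update_of_ne (Finset.ne_of_mem_erase hj)]
        rw [hp, Function.update_self]
        have : (ψ ^ (n + 1)) ^ (n + 1) = ψ := by
          rw [← pow_mul]
          have : (n+1) * (n+1) = n * (n+2) + 1 := by ring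
          rw [this, pow_add, pow_mul', hψ, one_pow, one_mul, pow_one]
        rw [this]
        ring
      · have hp : ∏ j ∈ Finset.univ.erase i, Function.update (fun _ => (1:ℂ)) 0 (ψ ^ (n + 1)) j = ψ ^ (n + 1) := by
          apply Finset.prod_eq_single_of_mem 0 (Finset.mem_erase.2 ⟨hi.symm, Finset.mem_univ _⟩)
          intro j _ hj0
          rw [Function.update_of_ne hj0]
        rw [hp, Function.update_of_ne hi, one_pow]
        have : ψ * ψ ^ (n + 1) = 1 := by rw [← pow_succ']; exact hψ
        rw [this]
        ring
end

section
/- Fix an integer n ≥ 1, let U ⊆ ℂ ∖ {0, 1} be open, and let f_0, …, f_n be holomorphic solutions of the Picard–Fuchs equation 𝒟ₙ f_j = 0 on U. Then their Wronskian W(φ) = det((1/i!)·ϑ^i f_j(φ))_{0 ≤ i,j ≤ n} satisfies the first-order differential equation (1 − φ)·ϑW(φ) = ((n+1)/2)·φ·W(φ) for all φ ∈ U. -/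
/-- The logarithmic derivative operator `ϑf(φ) = φ·f′(φ)`. -/
noncomputable def theta (f : ℂ → ℂ) : ℂ → ℂ := fun z => z * deriv f z

/-- The operator `∏_{k=1}^{m} (ϑ + k/(n+2))` (composition of operators),
where `(ϑ + c)g = ϑg + c·g`. -/
noncomputable def pfProd (n : ℕ) : ℕ → (ℂ → ℂ) → ℂ → ℂ
  | 0, f => f
  | m + 1, f => fun z =>
      theta (pfProd n m f) z + (((m : ℂ) + 1) / ((n : ℂ) + 2)) * pfProd n m f z

/-- `f` is a solution of the Picard–Fuchs equation `𝒟ₙ f = 0` on `U`. -/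
def IsPFSol (n : ℕ) (U : Set ℂ) (f : ℂ → ℂ) : Prop :=
  ∀ z ∈ U, theta^[n + 1] f z = z * pfProd n (n + 1) f z

/-- The Wronskian `W(φ) = det((1/i!)·ϑ^i f_j(φ))_{0 ≤ i,j ≤ n}`. -/
noncomputable def wronskian (n : ℕ) (f : Fin (n + 1) → ℂ → ℂ) : ℂ → ℂ := fun z =>
  Matrix.det (Matrix.of fun i j : Fin (n + 1) =>
    (((i : ℕ).factorial : ℂ))⁻¹ * theta^[(i : ℕ)] (f j) z)


open Finset

lemma det_row_formula {N : ℕ} (A : Matrix (Fin N) (Fin N) ℂ) :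
    A.det = ∑ σ : Equiv.Perm (Fin N), ((Equiv.Perm.sign σ : ℤ) : ℂ) * ∏ i, A i (σ i) := by
  rw [← Matrix.det_transpose, Matrix.det_apply']
  rfl

lemma det_updateRow_finset_sum {N : ℕ} {ι : Type*} (A : Matrix (Fin N) (Fin N) ℂ) (r : Fin N)
    (s : Finset ι) (v : ι → Fin N → ℂ) :
    (A.updateRow r (∑ i ∈ s, v i)).det = ∑ i ∈ s, (A.updateRow r (v i)).det := by
  classical
  induction s using Finset.induction_on with
  | empty =>
      simp only [Finset.sum_empty]
      exact Matrix.det_eq_zero_of_row_eq_zero r (fun j => by simp)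
  | insert _ _ h ih =>
      rw [Finset.sum_insert h, Matrix.det_updateRow_add, ih, Finset.sum_insert h]

lemma hasDerivAt_det {N : ℕ} (M : Fin N → Fin N → ℂ → ℂ) (M' : Fin N → Fin N → ℂ) (x : ℂ)
    (h : ∀ i j, HasDerivAt (M i j) (M' i j) x) :
    HasDerivAt (fun t => (Matrix.of fun i j => M i j t).det)
      (∑ k, ((Matrix.of fun i j => M i j x).updateRow k (fun j => M' k j)).det) x := by
  classical
  have key := fun t => det_row_formula (Matrix.of fun i j => M i j t)
  simp only [key]
  have main : ∀ σ : Equiv.Perm (Fin N),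
      HasDerivAt (fun t => ((Equiv.Perm.sign σ : ℤ) : ℂ) * ∏ i, (Matrix.of fun i j => M i j t) i (σ i))
        (((Equiv.Perm.sign σ : ℤ) : ℂ) *
          ∑ k, (∏ i ∈ Finset.univ.erase k, M i (σ i) x) • M' k (σ k)) x := by
    intro σ
    exact (HasDerivAt.fun_finsetProd (fun i _ => h i (σ i))).const_mul _
  have := HasDerivAt.fun_sum (fun σ (_ : σ ∈ (Finset.univ : Finset (Equiv.Perm (Fin N)))) => main σ)
  refine this.congr_deriv (Eq.symm ?_)
  simp only [smul_eq_mul, Finset.mul_sum]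
  rw [Finset.sum_comm]
  refine Finset.sum_congr rfl (fun k _ => ?_)
  rw [det_row_formula]
  refine Finset.sum_congr rfl (fun σ _ => ?_)
  rw [← Finset.mul_prod_erase Finset.univ _ (Finset.mem_univ k)]
  have h1 : ((Matrix.of fun i j => M i j x).updateRow k fun j => M' k j) k (σ k) = M' k (σ k) := by
    simp [Matrix.updateRow_self]
  have h2 : ∀ i ∈ Finset.univ.erase k,
      ((Matrix.of fun i j => M i j x).updateRow k fun j => M' k j) i (σ i) = M i (σ i) x := by
    intro i hi
    rw [Matrix.updateRow_ne (Finset.ne_of_mem_erase hi)]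
    rfl
  rw [h1, Finset.prod_congr rfl h2]
  ring



open Finset

lemma theta_analytic {U : Set ℂ} (hU : IsOpen U) {f : ℂ → ℂ} (hf : AnalyticOnNhd ℂ f U) :
    AnalyticOnNhd ℂ (theta f) U :=
  analyticOnNhd_id.mul hf.deriv

lemma theta_iter_analytic {U : Set ℂ} (hU : IsOpen U) {f : ℂ → ℂ}
    (hf : AnalyticOnNhd ℂ f U) (i : ℕ) : AnalyticOnNhd ℂ (theta^[i] f) U := by
  induction i with
  | zero => exact hf
  | succ i ih => rw [Function.iterate_succ_apply']; exact theta_analytic hU ih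

lemma theta_iter_succ (f : ℂ → ℂ) (i : ℕ) (z : ℂ) :
    theta^[i + 1] f z = z * deriv (theta^[i] f) z := by
  rw [Function.iterate_succ_apply']; rfl

/-- coefficients of the expansion of `pfProd n m` in powers of `theta` -/
noncomputable def cpf (n : ℕ) : ℕ → ℕ → ℂ
  | 0, i => if i = 0 then 1 else 0
  | m + 1, i => (if i = 0 then 0 else cpf n m (i - 1)) + (((m : ℂ) + 1) / ((n : ℂ) + 2)) * cpf n m i

lemma cpf_eq_zero (n : ℕ) : ∀ m i, m < i → cpf n m i = 0 := by
  intro m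
  induction m with
  | zero =>
      intro i hi
      match i, hi with
      | i + 1, _ => simp [cpf]
  | succ m ih =>
      intro i hi
      match i, hi with
      | i + 1, hi =>
        simp only [cpf, Nat.add_sub_cancel, if_neg (Nat.succ_ne_zero i)]
        rw [ih i (by omega), ih (i+1) (by omega)]
        ring

lemma cpf_diag (n : ℕ) : ∀ m, cpf n m m = 1 := by
  intro m
  induction m with
  | zero => simp [cpf]
  | succ m ih =>
      simp only [cpf, Nat.add_sub_cancel, if_neg (Nat.succ_ne_zero m)]
      rw [ih, cpf_eq_zero n m (m+1) (by omega)]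
      ring

lemma cpf_subdiag (n : ℕ) : ∀ m, cpf n (m + 1) m = ((m : ℂ) + 1) * ((m : ℂ) + 2) / 2 / ((n : ℂ) + 2) := by
  intro m
  induction m with
  | zero => norm_num [cpf]
  | succ m ih =>
      have hstep : cpf n (m + 1 + 1) (m + 1) =
          cpf n (m + 1) m + (((m : ℂ) + 1 + 1) / ((n : ℂ) + 2)) * cpf n (m + 1) (m + 1) := by
        show (if m + 1 = 0 then (0:ℂ) else cpf n (m+1) (m + 1 - 1)) + _ = _
        rw [if_neg (Nat.succ_ne_zero m), Nat.add_sub_cancel]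
        push_cast; ring
      rw [hstep, ih, cpf_diag]
      have hn2 : ((n : ℂ) + 2) ≠ 0 := by
        exact_mod_cast (Nat.cast_ne_zero (R := ℂ)).mpr (by omega : (n : ℕ) + 2 ≠ 0)
      push_cast
      field_simp
      ring

lemma pfProd_expand (n m : ℕ) {U : Set ℂ} (hU : IsOpen U) {f : ℂ → ℂ}
    (hf : AnalyticOnNhd ℂ f U) :
    ∀ z ∈ U, pfProd n m f z = ∑ i ∈ Finset.range (m + 1), cpf n m i * theta^[i] f z := by
  induction m with
  | zero => intro z hz; simp [pfProd, cpf]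
  | succ m ih =>
      intro z hz
      have hd : ∀ i, DifferentiableAt ℂ (theta^[i] f) z :=
        fun i => ((theta_iter_analytic hU hf i) z hz).differentiableAt
      have heq : pfProd n m f =ᶠ[nhds z]
          fun w => ∑ i ∈ Finset.range (m + 1), cpf n m i * theta^[i] f w := by
        filter_upwards [hU.mem_nhds hz] with w hw using ih w hw
      have hderiv : deriv (pfProd n m f) z
          = ∑ i ∈ Finset.range (m + 1), cpf n m i * deriv (theta^[i] f) z := by
        rw [heq.deriv_eq, deriv_fun_sum (fun i _ => ((hd i).const_mul _))]
        exact Finset.sum_congr rfl fun i _ => deriv_const_mul _ (hd i)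
      have hci : ∀ i, cpf n (m+1) (i+1)
          = cpf n m i + (((m : ℂ) + 1) / ((n : ℂ) + 2)) * cpf n m (i+1) := by
        intro i; simp [cpf]
      have hc0 : cpf n (m+1) 0 = (((m : ℂ) + 1) / ((n : ℂ) + 2)) * cpf n m 0 := by
        simp [cpf]
      show theta (pfProd n m f) z + (((m : ℂ) + 1) / ((n : ℂ) + 2)) * pfProd n m f z = _
      rw [show theta (pfProd n m f) z = z * deriv (pfProd n m f) z from rfl, hderiv, ih z hz]
      rw [Finset.sum_range_succ' (fun i => cpf n (m+1) i * theta^[i] f z) (m+1)]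
      simp only [hci, hc0]
      rw [Finset.mul_sum, Finset.mul_sum]
      simp only [add_mul]
      rw [Finset.sum_add_distrib]
      rw [Finset.sum_range_succ (fun i => (((m : ℂ) + 1) / ((n : ℂ) + 2)) * cpf n m (i+1) * theta^[i+1] f z) m]
      rw [cpf_eq_zero n m (m+1) (by omega)]
      rw [Finset.sum_range_succ' (fun i => (((m : ℂ) + 1) / ((n : ℂ) + 2)) * (cpf n m i * theta^[i] f z)) m]
      have h1 : ∀ i ∈ Finset.range (m+1), z * (cpf n m i * deriv (theta^[i] f) z)
          = cpf n m i * theta^[i+1] f z := by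
        intro i _; rw [theta_iter_succ]; ring
      rw [Finset.sum_congr rfl h1]
      simp only [Function.iterate_zero_apply]
      ring_nf




/-- the Wronskian of holomorphic solutions `f_0, …, f_n` of the Picard–Fuchs
equation on an open `U ⊆ ℂ ∖ {0,1}` satisfies `(1 − φ)·ϑW(φ) = ((n+1)/2)·φ·W(φ)` on `U`. -/
theorem wronskian_first_order_ODE (n : ℕ) (hn : 1 ≤ n) (U : Set ℂ) (hU : IsOpen U)
    (hUsub : U ⊆ {(0 : ℂ), 1}ᶜ)
    (f : Fin (n + 1) → ℂ → ℂ)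
    (hhol : ∀ j, DifferentiableOn ℂ (f j) U)
    (hsol : ∀ j, IsPFSol n U (f j)) :
    ∀ φ ∈ U, (1 - φ) * theta (wronskian n f) φ =
      (((n : ℂ) + 1) / 2) * φ * wronskian n f φ := by
  intro φ hφ
  classical
  have hfan : ∀ j, AnalyticOnNhd ℂ (f j) U := fun j => (hhol j).analyticOnNhd hU
  have hAn : ∀ (i : ℕ) (j : Fin (n+1)), AnalyticOnNhd ℂ (theta^[i] (f j)) U :=
    fun i j => theta_iter_analytic hU (hfan j) i
  have hn2 : ((n : ℂ) + 2) ≠ 0 :=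
    mod_cast (Nat.cast_ne_zero (R := ℂ)).mpr (by omega : (n : ℕ) + 2 ≠ 0)
  set A : Matrix (Fin (n+1)) (Fin (n+1)) ℂ :=
    Matrix.of (fun i j : Fin (n + 1) =>
      (((i : ℕ).factorial : ℂ))⁻¹ * theta^[(i : ℕ)] (f j) φ) with hA
  -- Step 1: derivative of the wronskian
  have hW : HasDerivAt (wronskian n f)
      (∑ k : Fin (n+1), ((A.updateRow k
        (fun j => (((k : ℕ).factorial : ℂ))⁻¹ * deriv (theta^[(k : ℕ)] (f j)) φ)).det)) φ := by
    exact hasDerivAt_det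
      (fun i j => fun t => (((i : ℕ).factorial : ℂ))⁻¹ * theta^[(i : ℕ)] (f j) t)
      (fun i j => (((i : ℕ).factorial : ℂ))⁻¹ * deriv (theta^[(i : ℕ)] (f j)) φ) φ
      (fun i j => ((hAn (i : ℕ) j φ hφ).differentiableAt.hasDerivAt).const_mul _)
  -- Step 2: theta of the wronskian as a single determinant
  set D : ℂ := (A.updateRow (Fin.last n)
      (fun j => ((n.factorial : ℂ))⁻¹ * theta^[n + 1] (f j) φ)).det with hD
  have hthetaW : theta (wronskian n f) φ = D := by
    show φ * deriv (wronskian n f) φ = D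
    rw [hW.deriv, Finset.mul_sum]
    have hterm : ∀ k : Fin (n+1), φ * ((A.updateRow k
        (fun j => (((k : ℕ).factorial : ℂ))⁻¹ * deriv (theta^[(k : ℕ)] (f j)) φ)).det)
        = (A.updateRow k
        (fun j => (((k : ℕ).factorial : ℂ))⁻¹ * theta^[(k : ℕ) + 1] (f j) φ)).det := by
      intro k
      have hr : (fun j => (((k : ℕ).factorial : ℂ))⁻¹ * theta^[(k : ℕ) + 1] (f j) φ)
          = φ • (fun j => (((k : ℕ).factorial : ℂ))⁻¹ * deriv (theta^[(k : ℕ)] (f j)) φ) := by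
        funext j; simp only [Pi.smul_apply, smul_eq_mul, theta_iter_succ]; ring
      rw [hr, Matrix.det_updateRow_smul]
    rw [Finset.sum_congr rfl (fun k _ => hterm k)]
    rw [Fin.sum_univ_castSucc]
    have hzero : ∀ k : Fin n, (A.updateRow k.castSucc
        (fun j => ((((k.castSucc : Fin (n+1)) : ℕ).factorial : ℂ))⁻¹ *
          theta^[((k.castSucc : Fin (n+1)) : ℕ) + 1] (f j) φ)).det = 0 := by
      intro k
      have hcoe : ((k.castSucc : Fin (n+1)) : ℕ) = (k : ℕ) := rfl
      have hrow : (fun j => ((((k.castSucc : Fin (n+1)) : ℕ).factorial : ℂ))⁻¹ *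
          theta^[((k.castSucc : Fin (n+1)) : ℕ) + 1] (f j) φ)
          = (((k : ℕ) + 1 : ℂ)) • A k.succ := by
        funext j
        have hfac : (((k : ℕ).factorial : ℂ))⁻¹
            = ((k : ℕ) + 1 : ℂ) * ((((k : ℕ) + 1).factorial : ℂ))⁻¹ := by
          rw [Nat.factorial_succ]
          push_cast
          rw [mul_inv]
          rw [mul_inv_cancel_left₀]
          exact_mod_cast (Nat.cast_ne_zero (R := ℂ)).mpr (by omega : (k : ℕ) + 1 ≠ 0)
        simp only [hcoe, Pi.smul_apply, smul_eq_mul, hA, Matrix.of_apply, Fin.val_succ]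
        rw [hfac]; ring
      rw [hrow, Matrix.det_updateRow_smul, Matrix.det_updateRow_eq_zero, mul_zero]
      intro hcon
      have h2 := congrArg Fin.val hcon
      simp [Fin.val_succ] at h2
    rw [Finset.sum_congr rfl (fun k _ => hzero k), Finset.sum_const_zero, zero_add]
    simp only [Fin.val_last]
    exact hD.symm
  -- Step 3: Picard–Fuchs substitution
  have hrowPF : (fun j => ((n.factorial : ℂ))⁻¹ * theta^[n + 1] (f j) φ)
      = ∑ i ∈ Finset.range (n + 2),
          (fun j => (n.factorial : ℂ)⁻¹ * φ * (cpf n (n+1) i * theta^[i] (f j) φ)) := by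
    funext j
    rw [Finset.sum_apply]
    rw [hsol j φ hφ, pfProd_expand n (n+1) hU (hfan j) φ hφ, Finset.mul_sum, Finset.mul_sum]
    exact Finset.sum_congr rfl (fun i _ => by ring)
  have hDsum : D = ∑ i ∈ Finset.range (n + 2),
      (A.updateRow (Fin.last n)
        (fun j => (n.factorial : ℂ)⁻¹ * φ * (cpf n (n+1) i * theta^[i] (f j) φ))).det := by
    rw [hD, hrowPF, det_updateRow_finset_sum]
  -- term i = n+1 : gives φ * D
  have htop : (A.updateRow (Fin.last n)
      (fun j => (n.factorial : ℂ)⁻¹ * φ * (cpf n (n+1) (n+1) * theta^[n+1] (f j) φ))).det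
      = φ * D := by
    have hr : (fun j => (n.factorial : ℂ)⁻¹ * φ * (cpf n (n+1) (n+1) * theta^[n+1] (f j) φ))
        = φ • (fun j => ((n.factorial : ℂ))⁻¹ * theta^[n + 1] (f j) φ) := by
      funext j
      rw [cpf_diag]
      simp only [Pi.smul_apply, smul_eq_mul]
      ring
    rw [hr, Matrix.det_updateRow_smul, hD]
  -- term i = n : gives φ * ((n+1)/2) * det A
  have hmid : (A.updateRow (Fin.last n)
      (fun j => (n.factorial : ℂ)⁻¹ * φ * (cpf n (n+1) n * theta^[n] (f j) φ))).det
      = φ * (((n : ℂ) + 1) / 2) * A.det := by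
    have hrow : (fun j => (n.factorial : ℂ)⁻¹ * φ * (cpf n (n+1) n * theta^[n] (f j) φ))
        = (φ * (((n : ℂ) + 1) / 2)) • A (Fin.last n) := by
      funext j
      have hc : cpf n (n+1) n = ((n : ℂ) + 1) / 2 := by
        rw [cpf_subdiag]
        field_simp
      show (n.factorial : ℂ)⁻¹ * φ * (cpf n (n+1) n * theta^[n] (f j) φ)
          = (φ * (((n : ℂ) + 1) / 2)) * ((n.factorial : ℂ)⁻¹ * theta^[n] (f j) φ)
      rw [hc]; ring
    rw [hrow, Matrix.det_updateRow_smul, Matrix.updateRow_eq_self]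
  -- terms i < n : vanish
  have hlow : ∀ i ∈ Finset.range n, (A.updateRow (Fin.last n)
      (fun j => (n.factorial : ℂ)⁻¹ * φ * (cpf n (n+1) i * theta^[i] (f j) φ))).det = 0 := by
    intro i hi
    rw [Finset.mem_range] at hi
    have hrow : (fun j => (n.factorial : ℂ)⁻¹ * φ * (cpf n (n+1) i * theta^[i] (f j) φ))
        = ((n.factorial : ℂ)⁻¹ * φ * cpf n (n+1) i * (i.factorial : ℂ)) •
          A ⟨i, by omega⟩ := by
      funext j
      have hfi : ((i.factorial : ℂ)) ≠ 0 :=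
        (Nat.cast_ne_zero (R := ℂ)).mpr (Nat.factorial_ne_zero i)
      show (n.factorial : ℂ)⁻¹ * φ * (cpf n (n+1) i * theta^[i] (f j) φ)
          = ((n.factorial : ℂ)⁻¹ * φ * cpf n (n+1) i * (i.factorial : ℂ)) *
            ((i.factorial : ℂ)⁻¹ * theta^[i] (f j) φ)
      linear_combination (-((n.factorial : ℂ)⁻¹ * φ * cpf n (n+1) i * theta^[i] (f j) φ)) *
        (mul_inv_cancel₀ hfi)
    rw [hrow, Matrix.det_updateRow_smul, Matrix.det_updateRow_eq_zero, mul_zero]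
    intro hcon
    have h2 := congrArg Fin.val hcon
    simp only [Fin.val_last] at h2
    omega
  -- put it together
  have hkey : D = φ * D + φ * (((n : ℂ) + 1) / 2) * wronskian n f φ := by
    have hrange : ∑ i ∈ Finset.range (n + 2),
        (A.updateRow (Fin.last n)
          (fun j => (n.factorial : ℂ)⁻¹ * φ * (cpf n (n+1) i * theta^[i] (f j) φ))).det
        = φ * (((n : ℂ) + 1) / 2) * A.det + φ * D := by
      rw [Finset.sum_range_succ, Finset.sum_range_succ,
        Finset.sum_congr rfl hlow, Finset.sum_const_zero, zero_add, hmid, htop]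
    calc D = _ := hDsum
    _ = φ * (((n : ℂ) + 1) / 2) * A.det + φ * D := hrange
    _ = φ * D + φ * (((n : ℂ) + 1) / 2) * wronskian n f φ := by
        rw [show wronskian n f φ = A.det from rfl]; ring
  rw [hthetaW]
  linear_combination hkey
end

section
/- Let V be a vector space over ℚ of dimension n+1 and let N : V → V be a linear map with N^{n+1} = 0 and N^n ≠ 0. Suppose A_0,…,A_n and A′_0,…,A′_n are two bases of V each satisfying N(A_0) = 0, N(A_i) = Σ_{k=0}^{i−1} C(i,k)·A_k and N(A′_0) = 0, N(A′_i) = Σ_{k=0}^{i−1} C(i,k)·A′_k for 1 ≤ i ≤ n. Then there exist rational numbers c_0, c_1, …, c_n with c_0 ≠ 0 such that A′_i = Σ_{j=0}^{i} C(i,j)·c_{i−j}·A_j for every 0 ≤ i ≤ n; that is, the transition matrix between two such bases is an invertible lower-triangular matrix of Pascal type. -/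
open Finset

lemma ico_identity (c : ℕ → ℚ) (i m : ℕ) :
    (∑ k ∈ Finset.Ico m i, ((i.choose k : ℚ) * ((k.choose m : ℚ) * c (k - m))))
      = ∑ j ∈ Finset.Ico (m + 1) (i + 1), ((i.choose j : ℚ) * ((j.choose m : ℚ) * c (i - j))) := by
  rcases le_or_gt i m with h | h
  · rw [Finset.Ico_eq_empty (by omega), Finset.Ico_eq_empty (by omega)]
    simp
  · refine Finset.sum_nbij' (fun k => i + m - k) (fun j => i + m - j) ?_ ?_ ?_ ?_ ?_
    · intro k hk; rw [Finset.mem_Ico] at *; omega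
    · intro j hj; rw [Finset.mem_Ico] at *; omega
    · intro k hk; rw [Finset.mem_Ico] at hk; omega
    · intro j hj; rw [Finset.mem_Ico] at hj; omega
    · intro k hk
      rw [Finset.mem_Ico] at hk
      obtain ⟨hmk, hki⟩ := hk
      have h1 : i.choose k * k.choose m = i.choose m * (i - m).choose (k - m) :=
        Nat.choose_mul hmk
      have h2 : i.choose (i + m - k) * (i + m - k).choose m
          = i.choose m * (i - m).choose (i + m - k - m) :=
        Nat.choose_mul (by omega)
      have h3 : (i - m).choose (i + m - k - m) = (i - m).choose (k - m) := by
        have he : i + m - k - m = (i - m) - (k - m) := by omega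
        rw [he, Nat.choose_symm (by omega)]
      have h4 : i - (i + m - k) = k - m := by omega
      have h5 : i.choose (i + m - k) * (i + m - k).choose m = i.choose k * k.choose m := by
        rw [h2, h3, ← h1]
      rw [h4, ← mul_assoc, ← mul_assoc]
      congr 1
      exact_mod_cast h5.symm

lemma fin_sum_ite {n : ℕ} (g : ℕ → ℚ) (lo hi : ℕ) (hhi : hi ≤ n + 1) :
    (∑ k : Fin (n + 1), if lo ≤ (k : ℕ) ∧ (k : ℕ) < hi then g (k : ℕ) else 0)
      = ∑ k ∈ Finset.Ico lo hi, g k := by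
  rw [Fin.sum_univ_eq_sum_range (fun k => if lo ≤ k ∧ k < hi then g k else 0)]
  rw [← Finset.sum_filter]
  congr 1
  ext k
  simp only [Finset.mem_filter, Finset.mem_range, Finset.mem_Ico]
  omega

lemma ker_span {n : ℕ} {V : Type*} [AddCommGroup V] [Module ℚ V]
    (N : Module.End ℚ V) (b : Module.Basis (Fin (n + 1)) ℚ V)
    (hb : ∀ i : Fin (n + 1), N (b i) =
      ∑ k : Fin (n + 1),
        if (k : ℕ) < (i : ℕ) then (((i : ℕ).choose (k : ℕ) : ℚ)) • b k else 0)
    (x : V) (hx : N x = 0) : x = (b.repr x 0) • b 0 := by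
  classical
  have hxsum : x = ∑ j : Fin (n + 1), b.repr x j • b j := (b.sum_repr x).symm
  -- the coefficient equations
  have h1 : N x = ∑ m : Fin (n + 1),
      (∑ j : Fin (n + 1),
        if (m : ℕ) < (j : ℕ) then b.repr x j * (((j : ℕ).choose (m : ℕ) : ℚ)) else 0) • b m := by
    conv_lhs => rw [hxsum]
    rw [map_sum]
    have : ∀ j : Fin (n + 1), N (b.repr x j • b j)
        = ∑ m : Fin (n + 1),
            (if (m : ℕ) < (j : ℕ) then b.repr x j * (((j : ℕ).choose (m : ℕ) : ℚ)) else 0) • b m := by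
      intro j
      rw [map_smul, hb j, Finset.smul_sum]
      refine Finset.sum_congr rfl fun m _ => ?_
      by_cases hm : (m : ℕ) < (j : ℕ)
      · rw [if_pos hm, if_pos hm, smul_smul]
      · rw [if_neg hm, if_neg hm, smul_zero, zero_smul]
    rw [Finset.sum_congr rfl fun j _ => this j, Finset.sum_comm]
    exact Finset.sum_congr rfl fun m _ => (Finset.sum_smul).symm
  have key : ∀ m : Fin (n + 1),
      (∑ j : Fin (n + 1),
        if (m : ℕ) < (j : ℕ) then b.repr x j * (((j : ℕ).choose (m : ℕ) : ℚ)) else 0) = 0 := by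
    intro m
    have h2 : (∑ m : Fin (n + 1),
      (∑ j : Fin (n + 1),
        if (m : ℕ) < (j : ℕ) then b.repr x j * (((j : ℕ).choose (m : ℕ) : ℚ)) else 0) • b m) = 0 := by
      rw [← h1, hx]
    have h3 := b.repr_sum_self (fun m => (∑ j : Fin (n + 1),
        if (m : ℕ) < (j : ℕ) then b.repr x j * (((j : ℕ).choose (m : ℕ) : ℚ)) else 0))
    rw [h2] at h3
    have := congrFun h3 m
    simpa using this.symm
  -- downward induction: all coordinates with index ≥ 1 vanish
  have hz : ∀ d : ℕ, ∀ j : Fin (n + 1), n + 1 - (j : ℕ) ≤ d → 1 ≤ (j : ℕ) → b.repr x j = 0 := by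
    intro d
    induction d with
    | zero => intro j hj _; exfalso; omega
    | succ d ih =>
      intro j hjd hj1
      have hm : (j : ℕ) - 1 < n + 1 := by omega
      have hkey := key ⟨(j : ℕ) - 1, hm⟩
      rw [Finset.sum_eq_single j] at hkey
      · rw [if_pos (by show (j : ℕ) - 1 < (j : ℕ); omega)] at hkey
        have hc : ((j : ℕ).choose ((⟨(j : ℕ) - 1, hm⟩ : Fin (n + 1)) : ℕ)) = (j : ℕ) := by
          show ((j : ℕ).choose ((j : ℕ) - 1)) = (j : ℕ)
          conv_lhs => rw [show (j:ℕ) - 1 = (j:ℕ) - 1 from rfl]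
          rw [Nat.choose_symm (by omega), Nat.choose_one_right]
        rw [hc] at hkey
        have : ((j : ℕ) : ℚ) ≠ 0 := by
          exact_mod_cast (by omega : (j : ℕ) ≠ 0)
        exact (mul_eq_zero.mp hkey).resolve_right this
      · intro j' _ hne
        by_cases hlt : ((⟨(j : ℕ) - 1, hm⟩ : Fin (n + 1)) : ℕ) < (j' : ℕ)
        · rw [if_pos hlt]
          simp only [] at hlt
          have hval : (j' : ℕ) ≠ (j : ℕ) := fun h => hne (Fin.ext h)
          have : b.repr x j' = 0 := ih j' (by omega) (by omega)
          rw [this, zero_mul]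
        · rw [if_neg hlt]
      · intro h; exact absurd (Finset.mem_univ j) h
  conv_lhs => rw [hxsum]
  rw [Finset.sum_eq_single 0]
  · intro j' _ hne
    have : (j' : ℕ) ≠ 0 := by
      intro h; exact hne (Fin.ext (by simpa using h))
    rw [hz (n + 1) j' (by omega) (by omega), zero_smul]
  · intro h; exact absurd (Finset.mem_univ 0) h


/-- two bases of an `(n+1)`-dimensional `ℚ`-vector space each satisfying the
Pascal-type relations `N(A_0) = 0`, `N(A_i) = Σ_{k<i} C(i,k)·A_k` for a nilpotent `N` with
`N^{n+1} = 0`, `N^n ≠ 0`, are related by an invertible lower-triangular transition matrix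
of Pascal type: `A′_i = Σ_{j≤i} C(i,j)·c_{i−j}·A_j` with `c_0 ≠ 0`. -/
theorem pascal_basis_transition (n : ℕ) (V : Type*) [AddCommGroup V] [Module ℚ V]
    [FiniteDimensional ℚ V] (hdim : Module.finrank ℚ V = n + 1)
    (N : Module.End ℚ V) (hN1 : N ^ (n + 1) = 0) (hN2 : N ^ n ≠ 0)
    (b b' : Module.Basis (Fin (n + 1)) ℚ V)
    (hb : ∀ i : Fin (n + 1), N (b i) =
      ∑ k : Fin (n + 1),
        if (k : ℕ) < (i : ℕ) then (((i : ℕ).choose (k : ℕ) : ℚ)) • b k else 0)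
    (hb' : ∀ i : Fin (n + 1), N (b' i) =
      ∑ k : Fin (n + 1),
        if (k : ℕ) < (i : ℕ) then (((i : ℕ).choose (k : ℕ) : ℚ)) • b' k else 0) :
    ∃ c : ℕ → ℚ, c 0 ≠ 0 ∧
      ∀ i : Fin (n + 1), b' i =
        ∑ j : Fin (n + 1),
          if (j : ℕ) ≤ (i : ℕ) then
            ((((i : ℕ).choose (j : ℕ) : ℚ)) * c ((i : ℕ) - (j : ℕ))) • b j
          else 0 := by
  classical
  set c : ℕ → ℚ := fun m => if h : m < n + 1 then b.repr (b' ⟨m, h⟩) 0 else 1 with hc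
  have hcval : ∀ k : Fin (n + 1), c (k : ℕ) = b.repr (b' k) 0 := by
    intro k
    simp only [hc]
    rw [dif_pos k.isLt]
  have main : ∀ M : ℕ, ∀ i : Fin (n + 1), (i : ℕ) = M →
      b' i = ∑ j : Fin (n + 1),
          if (j : ℕ) ≤ (i : ℕ) then
            ((((i : ℕ).choose (j : ℕ) : ℚ)) * c ((i : ℕ) - (j : ℕ))) • b j
          else 0 := by
    intro M
    induction M using Nat.strong_induction_on with
    | _ M ih =>
    intro i hiM
    subst hiM
    set S : V := ∑ j : Fin (n + 1),
        (if 1 ≤ (j : ℕ) ∧ (j : ℕ) ≤ (i : ℕ) then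
          ((((i : ℕ).choose (j : ℕ) : ℚ)) * c ((i : ℕ) - (j : ℕ))) • b j
        else 0) with hS
    -- Step A : expression for N (b' i)
    have hA : N (b' i) = ∑ m : Fin (n + 1),
        (∑ k : Fin (n + 1),
          if (m : ℕ) ≤ (k : ℕ) ∧ (k : ℕ) < (i : ℕ) then
            (((i : ℕ).choose (k : ℕ) : ℚ)) *
              ((((k : ℕ).choose (m : ℕ) : ℚ)) * c ((k : ℕ) - (m : ℕ)))
          else 0) • b m := by
      rw [hb' i]
      have step : ∀ k : Fin (n + 1),
          (if (k : ℕ) < (i : ℕ) then (((i : ℕ).choose (k : ℕ) : ℚ)) • b' k else 0)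
            = ∑ m : Fin (n + 1),
              (if (m : ℕ) ≤ (k : ℕ) ∧ (k : ℕ) < (i : ℕ) then
                (((i : ℕ).choose (k : ℕ) : ℚ)) *
                  ((((k : ℕ).choose (m : ℕ) : ℚ)) * c ((k : ℕ) - (m : ℕ)))
              else 0) • b m := by
        intro k
        by_cases hk : (k : ℕ) < (i : ℕ)
        · rw [if_pos hk, ih (k : ℕ) (by omega) k rfl, Finset.smul_sum]
          refine Finset.sum_congr rfl fun m _ => ?_
          by_cases hm : (m : ℕ) ≤ (k : ℕ)
          · rw [if_pos hm, if_pos ⟨hm, hk⟩, smul_smul]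
          · rw [if_neg hm, if_neg (fun hcon => hm hcon.1), smul_zero, zero_smul]
        · rw [if_neg hk]
          exact (Finset.sum_eq_zero fun m _ => by
            rw [if_neg (fun hcon => hk hcon.2), zero_smul]).symm
      rw [Finset.sum_congr rfl fun k _ => step k, Finset.sum_comm]
      exact Finset.sum_congr rfl fun m _ => (Finset.sum_smul).symm
    -- Step B : expression for N S
    have hB : N S = ∑ m : Fin (n + 1),
        (∑ j : Fin (n + 1),
          if (m : ℕ) + 1 ≤ (j : ℕ) ∧ (j : ℕ) < (i : ℕ) + 1 then
            (((i : ℕ).choose (j : ℕ) : ℚ)) *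
              ((((j : ℕ).choose (m : ℕ) : ℚ)) * c ((i : ℕ) - (j : ℕ)))
          else 0) • b m := by
      rw [hS, map_sum]
      have step : ∀ j : Fin (n + 1),
          N (if 1 ≤ (j : ℕ) ∧ (j : ℕ) ≤ (i : ℕ) then
              ((((i : ℕ).choose (j : ℕ) : ℚ)) * c ((i : ℕ) - (j : ℕ))) • b j
            else 0)
          = ∑ m : Fin (n + 1),
              (if (m : ℕ) + 1 ≤ (j : ℕ) ∧ (j : ℕ) < (i : ℕ) + 1 then
                (((i : ℕ).choose (j : ℕ) : ℚ)) *
                  ((((j : ℕ).choose (m : ℕ) : ℚ)) * c ((i : ℕ) - (j : ℕ)))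
              else 0) • b m := by
        intro j
        by_cases hj : 1 ≤ (j : ℕ) ∧ (j : ℕ) ≤ (i : ℕ)
        · rw [if_pos hj, map_smul, hb j, Finset.smul_sum]
          refine Finset.sum_congr rfl fun m _ => ?_
          by_cases hm : (m : ℕ) < (j : ℕ)
          · rw [if_pos hm, if_pos ⟨by omega, by omega⟩, smul_smul,
              show ((((i : ℕ).choose (j : ℕ) : ℚ)) * c ((i : ℕ) - (j : ℕ))) *
                  (((j : ℕ).choose (m : ℕ) : ℚ))
                = (((i : ℕ).choose (j : ℕ) : ℚ)) *
                  ((((j : ℕ).choose (m : ℕ) : ℚ)) * c ((i : ℕ) - (j : ℕ))) from by ring]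
          · rw [if_neg hm, if_neg (by omega), smul_zero, zero_smul]
        · rw [if_neg hj, map_zero]
          exact (Finset.sum_eq_zero fun m _ => by
            rw [if_neg (by omega), zero_smul]).symm
      rw [Finset.sum_congr rfl fun j _ => step j, Finset.sum_comm]
      exact Finset.sum_congr rfl fun m _ => (Finset.sum_smul).symm
    -- the two coefficient families agree
    have hAB : ∀ m : Fin (n + 1),
        (∑ k : Fin (n + 1),
          if (m : ℕ) ≤ (k : ℕ) ∧ (k : ℕ) < (i : ℕ) then
            (((i : ℕ).choose (k : ℕ) : ℚ)) *
              ((((k : ℕ).choose (m : ℕ) : ℚ)) * c ((k : ℕ) - (m : ℕ)))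
          else 0)
        = (∑ j : Fin (n + 1),
          if (m : ℕ) + 1 ≤ (j : ℕ) ∧ (j : ℕ) < (i : ℕ) + 1 then
            (((i : ℕ).choose (j : ℕ) : ℚ)) *
              ((((j : ℕ).choose (m : ℕ) : ℚ)) * c ((i : ℕ) - (j : ℕ)))
          else 0) := by
      intro m
      rw [fin_sum_ite (fun k => (((i : ℕ).choose k : ℚ)) *
            (((k.choose (m : ℕ) : ℚ)) * c (k - (m : ℕ)))) (m : ℕ) (i : ℕ) (by omega),
          fin_sum_ite (fun j => (((i : ℕ).choose j : ℚ)) *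
            (((j.choose (m : ℕ) : ℚ)) * c ((i : ℕ) - j))) ((m : ℕ) + 1) ((i : ℕ) + 1) (by omega)]
      exact ico_identity c (i : ℕ) (m : ℕ)
    have hNu : N (b' i - S) = 0 := by
      rw [map_sub, hA, hB, ← Finset.sum_sub_distrib]
      refine Finset.sum_eq_zero fun m _ => ?_
      rw [← sub_smul, hAB m, sub_self, zero_smul]
    have hu := ker_span N b hb (b' i - S) hNu
    -- coefficient of b 0 in S is zero
    have hSrepr : b.repr S 0 = 0 := by
      have hS' : S = ∑ j : Fin (n + 1),
          (if 1 ≤ (j : ℕ) ∧ (j : ℕ) ≤ (i : ℕ) then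
            (((i : ℕ).choose (j : ℕ) : ℚ)) * c ((i : ℕ) - (j : ℕ)) else 0) • b j := by
        rw [hS]
        exact Finset.sum_congr rfl fun j _ => by rw [ite_smul, zero_smul]
      rw [hS']
      have := congrFun (b.repr_sum_self (fun j : Fin (n + 1) =>
        if 1 ≤ (j : ℕ) ∧ (j : ℕ) ≤ (i : ℕ) then
          (((i : ℕ).choose (j : ℕ) : ℚ)) * c ((i : ℕ) - (j : ℕ)) else 0)) 0
      rw [this]
      simp
    have hrepr : b.repr (b' i - S) 0 = c (i : ℕ) := by
      rw [map_sub, Finsupp.sub_apply, hSrepr, sub_zero, hcval i]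
    -- split the target sum
    have hsplit : (∑ j : Fin (n + 1),
          if (j : ℕ) ≤ (i : ℕ) then
            ((((i : ℕ).choose (j : ℕ) : ℚ)) * c ((i : ℕ) - (j : ℕ))) • b j
          else 0)
        = c (i : ℕ) • b 0 + S := by
      have step : ∀ j : Fin (n + 1),
          (if (j : ℕ) ≤ (i : ℕ) then
            ((((i : ℕ).choose (j : ℕ) : ℚ)) * c ((i : ℕ) - (j : ℕ))) • b j else 0)
          = (if j = 0 then
              ((((i : ℕ).choose (j : ℕ) : ℚ)) * c ((i : ℕ) - (j : ℕ))) • b j else 0)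
            + (if 1 ≤ (j : ℕ) ∧ (j : ℕ) ≤ (i : ℕ) then
              ((((i : ℕ).choose (j : ℕ) : ℚ)) * c ((i : ℕ) - (j : ℕ))) • b j else 0) := by
        intro j
        by_cases h0 : (j : ℕ) = 0
        · have hj0 : j = 0 := Fin.ext (by simpa using h0)
          rw [if_pos (by omega), if_pos hj0, if_neg (by omega), add_zero]
        · have hj0 : j ≠ 0 := fun h => h0 (by simp [h])
          rw [if_neg hj0, zero_add]
          by_cases hji : (j : ℕ) ≤ (i : ℕ)
          · rw [if_pos hji, if_pos ⟨by omega, hji⟩]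
          · rw [if_neg hji, if_neg (by omega)]
      rw [Finset.sum_congr rfl fun j _ => step j, Finset.sum_add_distrib, hS]
      congr 1
      rw [Finset.sum_ite_eq' Finset.univ (0 : Fin (n + 1))
        (fun j => ((((i : ℕ).choose (j : ℕ) : ℚ)) * c ((i : ℕ) - (j : ℕ))) • b j),
        if_pos (Finset.mem_univ _)]
      norm_num
    rw [hsplit, ← hrepr, ← hu]
    abel
  refine ⟨c, ?_, fun i => main (i : ℕ) i rfl⟩
  have h0 := main 0 0 rfl
  rw [Finset.sum_eq_single (0 : Fin (n + 1))] at h0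
  · intro hc0
    rw [if_pos (le_refl _)] at h0
    norm_num [hc0] at h0
    exact Module.Basis.ne_zero b' 0 h0
  · intro j' _ hne
    have : (j' : ℕ) ≠ 0 := fun h => hne (Fin.ext (by simpa using h))
    rw [if_neg (by simp; omega)]
  · intro h; exact absurd (Finset.mem_univ _) h
end

section
/- Fix an integer n ≥ 1. An (n+1)×(n+1) complex matrix M commutes with the Pascal matrix T₀ if and only if M is of Pascal type, i.e., there exists a sequence c_0,…,c_n of complex numbers such that M_{i,j} = C(i,j)·c_{i−j} for j ≤ i and M_{i,j} = 0 for j > i. In other words, the centralizer of T₀ in M_{n+1}(ℂ) is exactly the set of Pascal-type matrices. -/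
open Finset Polynomial

/-- Convolution lemma: sums against two binomial factors reduce to a short sum. -/
lemma pascal_conv (n i j : ℕ) (hi : i ≤ n) (F : ℕ → ℂ) :
    ∑ k ∈ Finset.range (n + 1), (i.choose k : ℂ) * (k.choose j : ℂ) * F k
      = (i.choose j : ℂ) *
        ∑ m ∈ Finset.range (i - j + 1), ((i - j).choose m : ℂ) * F (j + m) := by
  by_cases hji : j ≤ i
  · have h1 : ∑ k ∈ Finset.range (n + 1), (i.choose k : ℂ) * (k.choose j : ℂ) * F k
        = ∑ k ∈ Finset.Ico j (i + 1), (i.choose k : ℂ) * (k.choose j : ℂ) * F k := by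
      refine (Finset.sum_subset ?_ ?_).symm
      · intro k hk
        simp only [Finset.mem_Ico, Finset.mem_range] at *
        omega
      · intro k hk hk'
        simp only [Finset.mem_Ico, Finset.mem_range, not_and, not_lt] at hk hk'
        rcases lt_or_ge k j with h | h
        · simp [Nat.choose_eq_zero_of_lt h]
        · have : i < k := by omega
          simp [Nat.choose_eq_zero_of_lt this]
    rw [h1, Finset.sum_Ico_eq_sum_range]
    have h2 : i + 1 - j = i - j + 1 := by omega
    rw [h2, Finset.mul_sum]
    refine Finset.sum_congr rfl ?_
    intro m hm
    simp only [Finset.mem_range] at hm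
    have hm' : m ≤ i - j := by omega
    have key : i.choose (j + m) * (j + m).choose j = i.choose j * (i - j).choose m := by
      have := Nat.choose_mul (n := i) (k := j + m) (s := j) (by omega)
      simpa using this
    have : (i.choose (j + m) : ℂ) * ((j + m).choose j : ℂ)
        = (i.choose j : ℂ) * ((i - j).choose m : ℂ) := by
      exact_mod_cast congrArg (Nat.cast : ℕ → ℂ) key
    ring_nf
    calc (i.choose (j + m) : ℂ) * ((j + m).choose j : ℂ) * F (j + m)
        = ((i.choose j : ℂ) * ((i - j).choose m : ℂ)) * F (j + m) := by rw [this]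
      _ = _ := by ring
  · have h0 : ∀ k ∈ Finset.range (n + 1),
        (i.choose k : ℂ) * (k.choose j : ℂ) * F k = 0 := by
      intro k _
      rcases lt_or_ge k j with h | h
      · simp [Nat.choose_eq_zero_of_lt h]
      · have : i < k := by omega
        simp [Nat.choose_eq_zero_of_lt this]
    rw [Finset.sum_eq_zero h0, Nat.choose_eq_zero_of_lt (by omega), Nat.cast_zero, zero_mul]

/-- Entries of powers of the Pascal matrix. -/
lemma pascal_pow (n : ℕ) (T₀ : Matrix (Fin (n + 1)) (Fin (n + 1)) ℂ)
    (hT : ∀ i j : Fin (n + 1), T₀ i j = ((i : ℕ).choose (j : ℕ) : ℂ)) (t : ℕ) :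
    ∀ i j : Fin (n + 1),
      (T₀ ^ t) i j = ((i : ℕ).choose (j : ℕ) : ℂ) * (t : ℂ) ^ ((i : ℕ) - (j : ℕ)) := by
  induction t with
  | zero =>
    intro i j
    rcases lt_trichotomy (j : ℕ) (i : ℕ) with h | h | h
    · have hij : i ≠ j := by intro hh; rw [hh] at h; omega
      have : ((1 : Matrix (Fin (n+1)) (Fin (n+1)) ℂ)) i j = 0 := Matrix.one_apply_ne hij
      simp only [pow_zero, this, Nat.cast_zero]
      rw [zero_pow (by omega)]
      ring
    · have hij : i = j := Fin.ext (by omega)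
      subst hij
      simp [Matrix.one_apply_eq]
    · have hij : i ≠ j := by intro hh; rw [hh] at h; omega
      have : ((1 : Matrix (Fin (n+1)) (Fin (n+1)) ℂ)) i j = 0 := Matrix.one_apply_ne hij
      simp [this, Nat.choose_eq_zero_of_lt h]
  | succ t ih =>
    intro i j
    have : (T₀ ^ (t + 1)) i j = ∑ k : Fin (n + 1), (T₀ ^ t) i k * T₀ k j := by
      rw [pow_succ]; rfl
    rw [this]
    have hsum : ∑ k : Fin (n + 1), (T₀ ^ t) i k * T₀ k j
        = ∑ k ∈ Finset.range (n + 1),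
            ((i : ℕ).choose k : ℂ) * ((k : ℕ).choose (j : ℕ) : ℂ) * (t : ℂ) ^ ((i : ℕ) - k) := by
      rw [← Fin.sum_univ_eq_sum_range (fun k =>
        ((i : ℕ).choose k : ℂ) * ((k : ℕ).choose (j : ℕ) : ℂ) * (t : ℂ) ^ ((i : ℕ) - k))]
      refine Finset.sum_congr rfl ?_
      intro k _
      rw [ih i k, hT k j]
      ring
    rw [hsum, pascal_conv n (i : ℕ) (j : ℕ) (by omega) (fun k => (t : ℂ) ^ ((i : ℕ) - k))]
    congr 1
    have hbin := add_pow (1 : ℂ) (t : ℂ) ((i : ℕ) - (j : ℕ))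
    push_cast
    rw [show ((1 : ℂ) + t) = ((t : ℂ) + 1) by ring] at hbin
    rw [hbin]
    refine Finset.sum_congr rfl ?_
    intro m hm
    simp only [Finset.mem_range] at hm
    have harith : (i : ℕ) - ((j : ℕ) + m) = (i : ℕ) - (j : ℕ) - m := by omega
    rw [harith]
    ring

/-- an `(n+1)×(n+1)` complex matrix `M` commutes with the Pascal matrix `T₀`
if and only if `M` is of Pascal type, i.e. `M_{i,j} = C(i,j)·c_{i−j}` for `j ≤ i` and
`M_{i,j} = 0` for `j > i`, for some sequence `c`: the centralizer of `T₀` in `M_{n+1}(ℂ)`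
is exactly the set of Pascal-type matrices. -/
theorem pascal_centralizer (n : ℕ) (hn : 1 ≤ n)
    (T₀ M : Matrix (Fin (n + 1)) (Fin (n + 1)) ℂ)
    (hT : ∀ i j : Fin (n + 1), T₀ i j = ((i : ℕ).choose (j : ℕ) : ℂ)) :
    M * T₀ = T₀ * M ↔
      ∃ c : ℕ → ℂ, ∀ i j : Fin (n + 1),
        M i j = if (j : ℕ) ≤ (i : ℕ) then
          ((i : ℕ).choose (j : ℕ) : ℂ) * c ((i : ℕ) - (j : ℕ)) else 0 := by
  constructor
  · -- forward direction
    intro h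
    refine ⟨fun k => if hk : k ≤ n then M ⟨k, by omega⟩ ⟨0, by omega⟩ else 0, ?_⟩
    intro i j
    -- M commutes with all powers of T₀
    have hcomm : ∀ t : ℕ, M * T₀ ^ t = T₀ ^ t * M := fun t => (Commute.pow_right h t)
    -- entrywise at (i, 0)
    have hentry : ∀ t : ℕ,
        ∑ k : Fin (n + 1), M i k * (t : ℂ) ^ (k : ℕ)
          = ∑ k : Fin (n + 1), ((i : ℕ).choose (k : ℕ) : ℂ) * (t : ℂ) ^ ((i : ℕ) - (k : ℕ))
              * M k ⟨0, by omega⟩ := by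
      intro t
      have := congrFun (congrFun (hcomm t) i) ⟨0, by omega⟩
      have hL : (M * T₀ ^ t) i ⟨0, by omega⟩ = ∑ k : Fin (n + 1), M i k * (t : ℂ) ^ (k : ℕ) := by
        rw [Matrix.mul_apply]
        refine Finset.sum_congr rfl ?_
        intro k _
        rw [pascal_pow n T₀ hT t k ⟨0, by omega⟩]
        simp
      have hR : (T₀ ^ t * M) i ⟨0, by omega⟩
          = ∑ k : Fin (n + 1), ((i : ℕ).choose (k : ℕ) : ℂ) * (t : ℂ) ^ ((i : ℕ) - (k : ℕ))
              * M k ⟨0, by omega⟩ := by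
        rw [Matrix.mul_apply]
        refine Finset.sum_congr rfl ?_
        intro k _
        rw [pascal_pow n T₀ hT t i k]
      rw [hL, hR] at this
      exact this
    -- polynomial identity
    set p : ℂ[X] := ∑ k : Fin (n + 1), Polynomial.C (M i k) * X ^ (k : ℕ) with hp
    set q : ℂ[X] := ∑ k : Fin (n + 1),
        Polynomial.C (((i : ℕ).choose (k : ℕ) : ℂ) * M k ⟨0, by omega⟩)
          * X ^ ((i : ℕ) - (k : ℕ)) with hq
    have hpq : p = q := by
      apply Polynomial.eq_of_infinite_eval_eq
      apply Set.Infinite.mono (s := Set.range (Nat.cast : ℕ → ℂ))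
      · rintro _ ⟨t, rfl⟩
        simp only [Set.mem_setOf_eq, hp, hq, Polynomial.eval_finset_sum, Polynomial.eval_mul,
          Polynomial.eval_C, Polynomial.eval_pow, Polynomial.eval_X]
        rw [hentry t]
        exact Finset.sum_congr rfl fun k _ => by ring
      · exact Set.infinite_range_of_injective Nat.cast_injective
    have hcoeffp : p.coeff (j : ℕ) = M i j := by
      rw [hp, Polynomial.finset_sum_coeff]
      rw [Finset.sum_eq_single j]
      · simp [Polynomial.coeff_C_mul, Polynomial.coeff_X_pow]
      · intro k _ hk
        have : (j : ℕ) ≠ (k : ℕ) := fun hh => hk (Fin.ext hh.symm)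
        simp [Polynomial.coeff_C_mul, Polynomial.coeff_X_pow, this]
      · intro hj; exact absurd (Finset.mem_univ j) hj
    have hcoeffq : q.coeff (j : ℕ)
        = if (j : ℕ) ≤ (i : ℕ) then
            ((i : ℕ).choose ((i : ℕ) - (j : ℕ)) : ℂ) * M ⟨(i : ℕ) - (j : ℕ), by omega⟩ ⟨0, by omega⟩
          else 0 := by
      rw [hq, Polynomial.finset_sum_coeff]
      by_cases hji : (j : ℕ) ≤ (i : ℕ)
      · rw [if_pos hji]
        rw [Finset.sum_eq_single (⟨(i : ℕ) - (j : ℕ), by omega⟩ : Fin (n + 1))]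
        · simp only [Polynomial.coeff_C_mul, Polynomial.coeff_X_pow]
          rw [if_pos (by omega : (j : ℕ) = (i : ℕ) - ((i : ℕ) - (j : ℕ))), mul_one]
        · intro k _ hk
          simp only [Polynomial.coeff_C_mul, Polynomial.coeff_X_pow]
          by_cases hc : (j : ℕ) = (i : ℕ) - (k : ℕ)
          · rcases le_or_gt (k : ℕ) (i : ℕ) with hki | hki
            · exfalso
              apply hk
              apply Fin.ext
              simp only
              omega
            · rw [Nat.choose_eq_zero_of_lt hki]
              simp
          · simp [hc]
        · intro hmem; exact absurd (Finset.mem_univ _) hmem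
      · rw [if_neg hji]
        apply Finset.sum_eq_zero
        intro k _
        simp only [Polynomial.coeff_C_mul, Polynomial.coeff_X_pow]
        have : (j : ℕ) ≠ (i : ℕ) - (k : ℕ) := by omega
        simp [this]
    rw [← hcoeffp, hpq, hcoeffq]
    by_cases hji : (j : ℕ) ≤ (i : ℕ)
    · rw [if_pos hji, if_pos hji]
      have h1 : (i : ℕ) - (j : ℕ) ≤ n := by omega
      rw [Nat.choose_symm hji]
      simp only [h1, dif_pos]
    · rw [if_neg hji, if_neg hji]
  · -- backward direction
    rintro ⟨c, hc⟩ 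
    have hM : ∀ i j : Fin (n + 1),
        M i j = ((i : ℕ).choose (j : ℕ) : ℂ) * c ((i : ℕ) - (j : ℕ)) := by
      intro i j
      rw [hc i j]
      by_cases hji : (j : ℕ) ≤ (i : ℕ)
      · rw [if_pos hji]
      · rw [if_neg hji, Nat.choose_eq_zero_of_lt (by omega), Nat.cast_zero, zero_mul]
    ext i j
    rw [Matrix.mul_apply, Matrix.mul_apply]
    have hL : ∑ k : Fin (n + 1), M i k * T₀ k j
        = ∑ k ∈ Finset.range (n + 1),
            ((i : ℕ).choose k : ℂ) * ((k : ℕ).choose (j : ℕ) : ℂ) * c ((i : ℕ) - k) := by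
      rw [← Fin.sum_univ_eq_sum_range (fun k =>
        ((i : ℕ).choose k : ℂ) * ((k : ℕ).choose (j : ℕ) : ℂ) * c ((i : ℕ) - k))]
      refine Finset.sum_congr rfl fun k _ => by rw [hM i k, hT k j]; ring
    have hR : ∑ k : Fin (n + 1), T₀ i k * M k j
        = ∑ k ∈ Finset.range (n + 1),
            ((i : ℕ).choose k : ℂ) * ((k : ℕ).choose (j : ℕ) : ℂ) * c (k - (j : ℕ)) := by
      rw [← Fin.sum_univ_eq_sum_range (fun k =>
        ((i : ℕ).choose k : ℂ) * ((k : ℕ).choose (j : ℕ) : ℂ) * c (k - (j : ℕ)))]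
      refine Finset.sum_congr rfl fun k _ => by rw [hM k j, hT i k]; ring
    rw [hL, hR,
      pascal_conv n (i : ℕ) (j : ℕ) (by omega) (fun k => c ((i : ℕ) - k)),
      pascal_conv n (i : ℕ) (j : ℕ) (by omega) (fun k => c (k - (j : ℕ)))]
    congr 1
    set d := (i : ℕ) - (j : ℕ) with hd
    by_cases hji : (j : ℕ) ≤ (i : ℕ)
    · have e1 : ∀ m ∈ Finset.range (d + 1),
          (d.choose m : ℂ) * c ((i : ℕ) - ((j : ℕ) + m))
            = (d.choose (d - m) : ℂ) * c (d - m) := by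
        intro m hm
        simp only [Finset.mem_range] at hm
        rw [Nat.choose_symm (by omega : m ≤ d),
          show (i : ℕ) - ((j : ℕ) + m) = d - m by omega]
      have e2 : ∀ m ∈ Finset.range (d + 1),
          (d.choose m : ℂ) * c ((j : ℕ) + m - (j : ℕ))
            = (d.choose m : ℂ) * c m := by
        intro m hm
        rw [show (j : ℕ) + m - (j : ℕ) = m by omega]
      rw [Finset.sum_congr rfl e1, Finset.sum_congr rfl e2]
      have hrefl := Finset.sum_range_reflect (fun m => (d.choose m : ℂ) * c m) (d + 1)
      simp only [Nat.add_sub_cancel] at hrefl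
      exact hrefl
    · have hd0 : d = 0 := by omega
      rw [hd0]
      simp [show (i : ℕ) - (j : ℕ) = 0 by omega]
end

section
/- Fix an integer n ≥ 1. Let P be an (n+1)×(n+1) complex lower unitriangular matrix (P_{i,i} = 1 for all i and P_{i,j} = 0 for j > i) such that every entry of P·T₀·P^{−1} is a rational number. Then there exists a lower unitriangular matrix L with rational entries such that the matrix P′ = L·P satisfies P′_{i,j} = C(i,j)·P′_{i−j,0} for all 0 ≤ j < i ≤ n; that is, after a rational unitriangular change of basis, the period matrix is of Pascal type with entries a_{i,j} = C(i,j)·a_{i−j,0}. -/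
open Finset

namespace PascalAux

variable {R : Type*} [CommRing R] {n : ℕ}

/-- lower triangular -/
def Low (A : Matrix (Fin (n+1)) (Fin (n+1)) R) : Prop :=
  ∀ i j : Fin (n+1), (i : ℕ) < (j : ℕ) → A i j = 0

/-- strictly lower triangular -/
def SLow (A : Matrix (Fin (n+1)) (Fin (n+1)) R) : Prop :=
  ∀ i j : Fin (n+1), (i : ℕ) ≤ (j : ℕ) → A i j = 0

/-- subdiagonal entries are `j+1` -/
def Sdiag (A : Matrix (Fin (n+1)) (Fin (n+1)) R) : Prop :=
  ∀ i j : Fin (n+1), (j : ℕ) + 1 = (i : ℕ) → A i j = ((j : ℕ) : R) + 1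

theorem Low.bt {A : Matrix (Fin (n+1)) (Fin (n+1)) R} (hA : Low A) :
    A.BlockTriangular OrderDual.toDual := fun i j h => hA i j h

theorem low_mul {A B : Matrix (Fin (n+1)) (Fin (n+1)) R} (hA : Low A) (hB : Low B) :
    Low (A * B) := by
  intro i j hij
  rw [Matrix.mul_apply]
  apply Finset.sum_eq_zero
  intro m _
  rcases lt_or_ge (m : ℕ) (j : ℕ) with h | h
  · rw [hB m j h, mul_zero]
  · rw [hA i m (lt_of_lt_of_le hij h), zero_mul]

theorem low_mul_diag {A B : Matrix (Fin (n+1)) (Fin (n+1)) R} (hA : Low A) (hB : Low B)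
    (i : Fin (n+1)) : (A * B) i i = A i i * B i i := by
  rw [Matrix.mul_apply]
  apply Finset.sum_eq_single i
  · intro m _ hne
    rcases lt_trichotomy ((m : ℕ)) ((i : ℕ)) with h | h | h
    · rw [hB m i h, mul_zero]
    · exact absurd (Fin.ext h) hne
    · rw [hA i m h, zero_mul]
  · intro h; exact absurd (Finset.mem_univ i) h

theorem low_mul_succ {A B : Matrix (Fin (n+1)) (Fin (n+1)) R} (hA : Low A) (hB : Low B)
    (i j : Fin (n+1)) (hij : (j : ℕ) + 1 = (i : ℕ)) :
    (A * B) i j = A i j * B j j + A i i * B i j := by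
  rw [Matrix.mul_apply]
  have hne : j ≠ i := by intro h; rw [h] at hij; omega
  have hsub : ({j, i} : Finset (Fin (n+1))) ⊆ Finset.univ := Finset.subset_univ _
  have hzero : ∀ m ∈ Finset.univ, m ∉ ({j, i} : Finset (Fin (n+1))) → A i m * B m j = 0 := by
    intro m _ hm
    simp only [Finset.mem_insert, Finset.mem_singleton] at hm
    push_neg at hm
    obtain ⟨h1, h2⟩ := hm
    rcases lt_or_ge ((m : ℕ)) ((j : ℕ)) with h | h
    · rw [hB m j h, mul_zero]
    · have hmj : (m : ℕ) ≠ (j : ℕ) := fun hc => h1 (Fin.ext hc)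
      have hmi : (m : ℕ) ≠ (i : ℕ) := fun hc => h2 (Fin.ext hc)
      rw [hA i m (by omega), zero_mul]
  rw [← Finset.sum_subset hsub hzero, Finset.sum_pair hne]

theorem low_det {A : Matrix (Fin (n+1)) (Fin (n+1)) R} (hA : Low A) :
    A.det = ∏ i, A i i :=
  Matrix.det_of_lowerTriangular A hA.bt

theorem slow_pow {A : Matrix (Fin (n+1)) (Fin (n+1)) R} (hA : SLow A) :
    ∀ (k : ℕ) (i j : Fin (n+1)), (i : ℕ) < (j : ℕ) + k → (A ^ k) i j = 0 := by
  intro k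
  induction k with
  | zero =>
    intro i j h
    rw [pow_zero]
    exact Matrix.one_apply_ne (fun hc => by rw [hc] at h; omega)
  | succ k ih =>
    intro i j h
    rw [pow_succ', Matrix.mul_apply]
    apply Finset.sum_eq_zero
    intro m _
    rcases le_or_gt (i : ℕ) (m : ℕ) with hm | hm
    · rw [hA i m hm, zero_mul]
    · rw [ih m j (by omega), mul_zero]

theorem slow_pow_nilpotent {A : Matrix (Fin (n+1)) (Fin (n+1)) R} (hA : SLow A) :
    A ^ (n+1) = 0 := by
  ext i j
  have := slow_pow hA (n+1) i j (by omega)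
  simpa using this

theorem slow_pow_corner {A : Matrix (Fin (n+1)) (Fin (n+1)) R} (hA : SLow A)
    (hsub : Sdiag A) :
    ∀ (k : ℕ) (hk : k ≤ n), (A ^ k) ⟨k, by omega⟩ ⟨0, n.succ_pos⟩ = (Nat.factorial k : R) := by
  intro k
  induction k with
  | zero =>
    intro hk
    simp [Matrix.one_apply_eq]
  | succ k ih =>
    intro hk
    have hk' : k ≤ n := by omega
    rw [pow_succ', Matrix.mul_apply]
    have hone : ∀ m ∈ Finset.univ, m ≠ (⟨k, by omega⟩ : Fin (n+1)) →
        A ⟨k+1, by omega⟩ m * (A ^ k) m ⟨0, n.succ_pos⟩ = 0 := by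
      intro m _ hm
      have hmk : (m : ℕ) ≠ k := fun hc => hm (Fin.ext hc)
      rcases lt_or_ge ((m : ℕ)) k with h | h
      · rw [slow_pow hA k m ⟨0, n.succ_pos⟩ (by simpa using h), mul_zero]
      · rw [hA ⟨k+1, by omega⟩ m (by simp only [Fin.val_mk]; omega), zero_mul]
    rw [Finset.sum_eq_single _ hone (fun h => absurd (Finset.mem_univ _) h),
      hsub ⟨k+1, by omega⟩ ⟨k, by omega⟩ rfl, ih hk', Nat.factorial_succ]
    simp only [Fin.val_mk]
    push_cast
    ring

/-- the matrix whose `k`-th column is `(M-1)^k` applied to `e₀`. -/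
def colV (M : Matrix (Fin (n+1)) (Fin (n+1)) R) : Matrix (Fin (n+1)) (Fin (n+1)) R :=
  Matrix.of fun i k => ((M - 1) ^ (k : ℕ)) i ⟨0, n.succ_pos⟩

theorem colV_apply (M : Matrix (Fin (n+1)) (Fin (n+1)) R) (i k : Fin (n+1)) :
    colV M i k = ((M - 1) ^ (k : ℕ)) i ⟨0, n.succ_pos⟩ := rfl

/-- the shift-plus-identity matrix -/
def shiftS (n : ℕ) (R : Type*) [CommRing R] : Matrix (Fin (n+1)) (Fin (n+1)) R :=
  1 + Matrix.of (fun m k : Fin (n+1) => if (m : ℕ) = (k : ℕ) + 1 then 1 else 0)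

theorem colV_low {M : Matrix (Fin (n+1)) (Fin (n+1)) R} (hN : SLow (M - 1)) :
    Low (colV M) := by
  intro i k h
  exact slow_pow hN (k : ℕ) i ⟨0, n.succ_pos⟩ (by simpa using h)

theorem colV_diag {M : Matrix (Fin (n+1)) (Fin (n+1)) R} (hN : SLow (M - 1))
    (hsub : Sdiag (M - 1)) (k : Fin (n+1)) :
    colV M k k = (Nat.factorial (k : ℕ) : R) := by
  have := slow_pow_corner hN hsub (k : ℕ) (by omega)
  rw [colV_apply]
  convert this using 2

theorem colV_rel {M : Matrix (Fin (n+1)) (Fin (n+1)) R} (hN : SLow (M - 1)) :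
    M * colV M = colV M * shiftS n R := by
  ext i k
  have lhs : (M * colV M) i k
      = ((M - 1) ^ (k : ℕ)) i ⟨0, n.succ_pos⟩ + ((M - 1) ^ ((k : ℕ) + 1)) i ⟨0, n.succ_pos⟩ := by
    have h1 : (M * colV M) i k = (M * (M - 1) ^ (k : ℕ)) i ⟨0, n.succ_pos⟩ := by
      simp only [Matrix.mul_apply, colV_apply, Matrix.of_apply]
    have hM1 : M = 1 + (M - 1) := by abel
    have key : M * (M - 1) ^ (k : ℕ) = (M - 1) ^ (k : ℕ) + (M - 1) ^ ((k : ℕ) + 1) := by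
      have h2 : M * (M - 1) ^ (k : ℕ) = (1 + (M - 1)) * (M - 1) ^ (k : ℕ) := by rw [← hM1]
      rw [h2, add_mul, one_mul, ← pow_succ']
    rw [h1, key, Matrix.add_apply]
  have rhs : (colV M * shiftS n R) i k
      = ((M - 1) ^ (k : ℕ)) i ⟨0, n.succ_pos⟩ + ((M - 1) ^ ((k : ℕ) + 1)) i ⟨0, n.succ_pos⟩ := by
    rw [shiftS, Matrix.mul_add, Matrix.mul_one, Matrix.add_apply, colV_apply]
    congr 1
    rw [Matrix.mul_apply]
    rcases lt_or_ge ((k : ℕ)) n with hk | hk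
    · have hone : ∀ m ∈ Finset.univ, m ≠ (⟨(k : ℕ) + 1, by omega⟩ : Fin (n+1)) →
          colV M i m * Matrix.of (fun m k : Fin (n+1) =>
            if (m : ℕ) = (k : ℕ) + 1 then (1 : R) else 0) m k = 0 := by
        intro m _ hm
        have hne : (m : ℕ) ≠ (k : ℕ) + 1 := fun hc => hm (Fin.ext hc)
        simp [Matrix.of_apply, hne]
      rw [Finset.sum_eq_single _ hone (fun h => absurd (Finset.mem_univ _) h)]
      simp [colV_apply]
    · have hall : ∀ m ∈ Finset.univ, colV M i m * Matrix.of (fun m k : Fin (n+1) =>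
          if (m : ℕ) = (k : ℕ) + 1 then (1 : R) else 0) m k = 0 := by
        intro m _
        have hne : (m : ℕ) ≠ (k : ℕ) + 1 := by have := m.isLt; omega
        simp [Matrix.of_apply, hne]
      rw [Finset.sum_eq_zero hall]
      have hkn : (k : ℕ) = n := by have := k.isLt; omega
      rw [hkn, slow_pow_nilpotent hN]
      simp
  rw [lhs, rhs]

theorem sub_one_slow {M : Matrix (Fin (n+1)) (Fin (n+1)) R} (hl : Low M)
    (hd : ∀ i, M i i = 1) : SLow (M - 1) := by
  intro i j hij
  rcases eq_or_lt_of_le hij with h | h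
  · have hij' : i = j := Fin.ext h
    subst hij'
    simp [Matrix.sub_apply, hd i]
  · have hne : i ≠ j := fun hc => by rw [hc] at h; omega
    simp [Matrix.sub_apply, hl i j h, Matrix.one_apply_ne hne]

theorem sub_one_subdiag {M : Matrix (Fin (n+1)) (Fin (n+1)) R} (hs : Sdiag M) :
    Sdiag (M - 1) := by
  intro i j hij
  have hne : i ≠ j := fun hc => by rw [hc] at hij; omega
  rw [Matrix.sub_apply, Matrix.one_apply_ne hne, hs i j hij, sub_zero]

/-- The key normalization over `ℚ`. -/
theorem exists_conj (n : ℕ) (M T : Matrix (Fin (n+1)) (Fin (n+1)) ℚ)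
    (hMl : Low M) (hMd : ∀ i, M i i = 1) (hMs : Sdiag M)
    (hTl : Low T) (hTd : ∀ i, T i i = 1) (hTs : Sdiag T) :
    ∃ L : Matrix (Fin (n+1)) (Fin (n+1)) ℚ,
      Low L ∧ (∀ i, L i i = 1) ∧ L * M = T * L := by
  have hNM : SLow (M - 1) := sub_one_slow hMl hMd
  have hNT : SLow (T - 1) := sub_one_slow hTl hTd
  set V : Matrix (Fin (n+1)) (Fin (n+1)) ℚ := colV M with hV
  set W : Matrix (Fin (n+1)) (Fin (n+1)) ℚ := colV T with hW
  have hVl : Low V := colV_low hNM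
  have hWl : Low W := colV_low hNT
  have hVd : ∀ k, V k k = (Nat.factorial (k : ℕ) : ℚ) := colV_diag hNM (sub_one_subdiag hMs)
  have hWd : ∀ k, W k k = (Nat.factorial (k : ℕ) : ℚ) := colV_diag hNT (sub_one_subdiag hTs)
  have hVdet : IsUnit V.det := by
    rw [low_det hVl]
    apply isUnit_iff_ne_zero.mpr
    apply Finset.prod_ne_zero_iff.mpr
    intro k _
    rw [hVd k]
    exact_mod_cast Nat.factorial_ne_zero _
  have e1 : V * V⁻¹ = 1 := Matrix.mul_nonsing_inv _ hVdet
  have e2 : V⁻¹ * V = 1 := Matrix.nonsing_inv_mul _ hVdet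
  have h1 : M * V = V * shiftS n ℚ := colV_rel hNM
  have h2 : T * W = W * shiftS n ℚ := colV_rel hNT
  haveI : Invertible V := V.invertibleOfIsUnitDet hVdet
  have hVinv : Low V⁻¹ := fun i j h =>
    Matrix.blockTriangular_inv_of_blockTriangular hVl.bt
      (show OrderDual.toDual j < OrderDual.toDual i from h)
  refine ⟨W * V⁻¹, low_mul hWl hVinv, ?_, ?_⟩
  · intro k
    have hdd : V k k * V⁻¹ k k = 1 := by
      rw [← low_mul_diag hVl hVinv k, e1, Matrix.one_apply_eq]
    rw [low_mul_diag hWl hVinv k, hWd k, ← hVd k]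
    exact hdd
  · calc W * V⁻¹ * M = W * V⁻¹ * M * (V * V⁻¹) := by rw [e1, mul_one]
      _ = W * V⁻¹ * (M * V) * V⁻¹ := by
          simp only [mul_assoc]
      _ = W * V⁻¹ * (V * shiftS n ℚ) * V⁻¹ := by rw [h1]
      _ = W * (V⁻¹ * V) * shiftS n ℚ * V⁻¹ := by
          simp only [mul_assoc]
      _ = W * shiftS n ℚ * V⁻¹ := by rw [e2, mul_one]
      _ = T * (W * V⁻¹) := by rw [← h2, mul_assoc]

/-- binomial reindexing identity -/
theorem choose_flip {i j k : ℕ} (hjk : j ≤ k) (hki : k ≤ i) :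
    i.choose (i + j - k) * (i + j - k).choose j = i.choose k * k.choose j := by
  have h1 : j ≤ i + j - k := by omega
  have h2 : i + j - k ≤ i := by omega
  rw [Nat.choose_mul h1, Nat.choose_mul hjk]
  congr 1
  have e1 : i + j - k - j = (i - j) - (k - j) := by omega
  rw [e1]
  exact Nat.choose_symm (by omega)

theorem key_sum (a : ℕ → ℂ) (i j : ℕ) :
    ∑ k ∈ Finset.Icc j i, (i.choose k : ℂ) * a (i - k) * (k.choose j : ℂ)
      = ∑ k ∈ Finset.Icc j i, (i.choose k : ℂ) * ((k.choose j : ℂ) * a (k - j)) := by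
  apply Finset.sum_nbij' (i := fun k => i + j - k) (j := fun k => i + j - k)
  · intro k hk
    rw [Finset.mem_Icc] at hk ⊢
    omega
  · intro k hk
    rw [Finset.mem_Icc] at hk ⊢
    omega
  · intro k hk
    rw [Finset.mem_Icc] at hk
    omega
  · intro k hk
    rw [Finset.mem_Icc] at hk
    omega
  · intro k hk
    rw [Finset.mem_Icc] at hk
    obtain ⟨hjk, hki⟩ := hk
    have hch : (i.choose (i + j - k) : ℂ) * ((i + j - k).choose j : ℂ)
        = (i.choose k : ℂ) * (k.choose j : ℂ) := by
      exact_mod_cast congrArg (Nat.cast : ℕ → ℂ) (choose_flip hjk hki)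
    have he : i + j - k - j = i - k := by omega
    rw [he]
    calc (i.choose k : ℂ) * a (i - k) * (k.choose j : ℂ)
        = (i.choose k : ℂ) * (k.choose j : ℂ) * a (i - k) := by ring
      _ = (i.choose (i + j - k) : ℂ) * ((i + j - k).choose j : ℂ) * a (i - k) := by rw [hch]
      _ = (i.choose (i + j - k) : ℂ) * (((i + j - k).choose j : ℂ) * a (i - k)) := by ring

end PascalAux

open PascalAux

/-- if `P` is lower unitriangular and `P·T₀·P⁻¹` has rational entries, then
after multiplying by a rational lower unitriangular matrix `L`, the matrix `P′ = L·P`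
satisfies `P′_{i,j} = C(i,j)·P′_{i−j,0}` for all `j < i`: the period matrix becomes of
Pascal type `a_{i,j} = C(i,j)·a_{i−j,0}`. -/
theorem period_matrix_pascal_normalization (n : ℕ) (hn : 1 ≤ n)
    (P : Matrix (Fin (n + 1)) (Fin (n + 1)) ℂ)
    (hdiag : ∀ i, P i i = 1)
    (hupper : ∀ i j : Fin (n + 1), (i : ℕ) < (j : ℕ) → P i j = 0)
    (T₀ : Matrix (Fin (n + 1)) (Fin (n + 1)) ℂ)
    (hT : ∀ i j : Fin (n + 1), T₀ i j = ((i : ℕ).choose (j : ℕ) : ℂ))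
    (hrat : ∀ i j : Fin (n + 1), ∃ q : ℚ, (P * T₀ * P⁻¹) i j = (q : ℂ)) :
    ∃ L : Matrix (Fin (n + 1)) (Fin (n + 1)) ℂ,
      (∀ i j : Fin (n + 1), ∃ q : ℚ, L i j = (q : ℂ)) ∧
      (∀ i, L i i = 1) ∧
      (∀ i j : Fin (n + 1), (i : ℕ) < (j : ℕ) → L i j = 0) ∧
      ∀ i j : Fin (n + 1), (j : ℕ) < (i : ℕ) →
        (L * P) i j = ((i : ℕ).choose (j : ℕ) : ℂ) *
          (L * P) ⟨(i : ℕ) - (j : ℕ), lt_of_le_of_lt (Nat.sub_le _ _) i.isLt⟩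
            ⟨0, Nat.succ_pos n⟩ := by
  classical
  -- basic facts about P
  have hPl : Low P := hupper
  have hPdet : P.det = 1 := by
    rw [low_det hPl]
    exact Finset.prod_eq_one (fun i _ => hdiag i)
  have hPu : IsUnit P.det := by rw [hPdet]; exact isUnit_one
  haveI : Invertible P := P.invertibleOfIsUnitDet hPu
  have hPinvl : Low P⁻¹ := fun i j h =>
    Matrix.blockTriangular_inv_of_blockTriangular hPl.bt
      (show OrderDual.toDual j < OrderDual.toDual i from h)
  have ePP : P * P⁻¹ = 1 := Matrix.mul_nonsing_inv _ hPu
  have ePP' : P⁻¹ * P = 1 := Matrix.nonsing_inv_mul _ hPu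
  have hPinvd : ∀ i, P⁻¹ i i = 1 := by
    intro i
    have h := low_mul_diag hPl hPinvl i
    rw [ePP, Matrix.one_apply_eq, hdiag i, one_mul] at h
    exact h.symm
  -- facts about T₀
  have hTl : Low T₀ := by
    intro i j h
    rw [hT i j, Nat.choose_eq_zero_of_lt h, Nat.cast_zero]
  have hTd : ∀ i, T₀ i i = 1 := by
    intro i
    rw [hT i i, Nat.choose_self, Nat.cast_one]
  have hTs : Sdiag T₀ := by
    intro i j hij
    rw [hT i j, ← hij, Nat.choose_succ_self_right]
    push_cast
    ring
  -- facts about M := P * T₀ * P⁻¹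
  set Mc : Matrix (Fin (n+1)) (Fin (n+1)) ℂ := P * T₀ * P⁻¹ with hMcdef
  have hMcl : Low Mc := low_mul (low_mul hPl hTl) hPinvl
  have hMcd : ∀ i, Mc i i = 1 := by
    intro i
    rw [hMcdef, low_mul_diag (low_mul hPl hTl) hPinvl, low_mul_diag hPl hTl,
      hdiag i, hTd i, hPinvd i]
    ring
  have hMcs : Sdiag Mc := by
    intro i j hij
    have hne : i ≠ j := fun hc => by rw [hc] at hij; omega
    have hPinvsub : P⁻¹ i j = -P i j := by
      have h0 : (P * P⁻¹) i j = 0 := by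
        rw [ePP]
        exact Matrix.one_apply_ne hne
      rw [low_mul_succ hPl hPinvl i j hij, hPinvd j, hdiag i, mul_one, one_mul] at h0
      linear_combination h0
    have hPT_ij : (P * T₀) i j = P i j + (((j : ℕ) : ℂ) + 1) := by
      rw [low_mul_succ hPl hTl i j hij, hTd j, hdiag i, mul_one, one_mul, hTs i j hij]
    have hPT_ii : (P * T₀) i i = 1 := by
      rw [low_mul_diag hPl hTl, hdiag i, hTd i, one_mul]
    have hstep : Mc i j = (P * T₀) i j * P⁻¹ j j + (P * T₀) i i * P⁻¹ i j := by
      rw [hMcdef]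
      exact low_mul_succ (low_mul hPl hTl) hPinvl i j hij
    rw [hstep, hPT_ij, hPT_ii, hPinvd j, hPinvsub]
    ring
  -- rational model of Mc
  set Mq : Matrix (Fin (n+1)) (Fin (n+1)) ℚ :=
    Matrix.of (fun i j => Classical.choose (hrat i j)) with hMqdef
  have hMq : ∀ i j, ((Mq i j : ℚ) : ℂ) = Mc i j := fun i j =>
    (Classical.choose_spec (hrat i j)).symm
  have hMqmap : Mq.map (Rat.cast : ℚ → ℂ) = Mc := by
    ext i j
    exact hMq i j
  have hMql : Low Mq := by
    intro i j h
    have h2 := hMq i j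
    rw [hMcl i j h] at h2
    exact_mod_cast h2
  have hMqd : ∀ i, Mq i i = 1 := by
    intro i
    have h2 := hMq i i
    rw [hMcd i] at h2
    exact_mod_cast h2
  have hMqs : Sdiag Mq := by
    intro i j hij
    have h2 := hMq i j
    rw [hMcs i j hij] at h2
    exact_mod_cast h2
  set Tq : Matrix (Fin (n+1)) (Fin (n+1)) ℚ :=
    Matrix.of (fun i j => ((i : ℕ).choose (j : ℕ) : ℚ)) with hTqdef
  have hTql : Low Tq := by
    intro i j h
    simp only [hTqdef, Matrix.of_apply, Nat.choose_eq_zero_of_lt h, Nat.cast_zero]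
  have hTqd : ∀ i, Tq i i = 1 := by
    intro i
    simp only [hTqdef, Matrix.of_apply, Nat.choose_self, Nat.cast_one]
  have hTqs : Sdiag Tq := by
    intro i j hij
    simp only [hTqdef, Matrix.of_apply, ← hij, Nat.choose_succ_self_right]
    push_cast
    ring
  obtain ⟨Lq, hLql, hLqd, hLqconj⟩ := exists_conj n Mq Tq hMql hMqd hMqs hTql hTqd hTqs
  set f : ℚ →+* ℂ := Rat.castHom ℂ with hfdef
  set L : Matrix (Fin (n+1)) (Fin (n+1)) ℂ := Lq.map f with hLdef
  have hTqmap : Tq.map (f : ℚ → ℂ) = T₀ := by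
    ext i j
    simp only [Matrix.map_apply, hTqdef, Matrix.of_apply, hT i j, hfdef]
    push_cast
    rfl
  have hLM : L * Mc = T₀ * L := by
    have h2 := congrArg (fun X : Matrix (Fin (n+1)) (Fin (n+1)) ℚ => X.map (f : ℚ → ℂ)) hLqconj
    simp only [Matrix.map_mul] at h2
    have hMm : Mq.map (f : ℚ → ℂ) = Mc := hMqmap
    rw [hMm, hTqmap] at h2
    exact h2
  have hMP : Mc * P = P * T₀ := by
    rw [hMcdef, mul_assoc (P * T₀) P⁻¹ P, ePP', mul_one]
  have hAT : L * P * T₀ = T₀ * (L * P) := by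
    calc L * P * T₀ = L * (P * T₀) := mul_assoc _ _ _
      _ = L * (Mc * P) := by rw [hMP]
      _ = L * Mc * P := (mul_assoc _ _ _).symm
      _ = T₀ * L * P := by rw [hLM]
      _ = T₀ * (L * P) := mul_assoc _ _ _
  set A : Matrix (Fin (n+1)) (Fin (n+1)) ℂ := L * P with hAdef
  set B : Matrix (Fin (n+1)) (Fin (n+1)) ℂ := Matrix.of fun i j : Fin (n+1) =>
    ((i : ℕ).choose (j : ℕ) : ℂ) *
      A ⟨(i : ℕ) - (j : ℕ), lt_of_le_of_lt (Nat.sub_le _ _) i.isLt⟩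
        ⟨0, Nat.succ_pos n⟩ with hBdef
  -- B commutes with T₀
  set a : ℕ → ℂ := fun m =>
    if h : m < n + 1 then A ⟨m, h⟩ ⟨0, Nat.succ_pos n⟩ else 0 with hadef
  have hBa : ∀ p q : Fin (n+1), B p q = ((p : ℕ).choose (q : ℕ) : ℂ) * a ((p : ℕ) - (q : ℕ)) := by
    intro p q
    rw [hBdef]
    simp only [Matrix.of_apply, hadef]
    rw [dif_pos (lt_of_le_of_lt (Nat.sub_le _ _) p.isLt)]
  have hBT : B * T₀ = T₀ * B := by
    ext i j
    rw [Matrix.mul_apply, Matrix.mul_apply]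
    have hsubset : Finset.Icc (j : ℕ) (i : ℕ) ⊆ Finset.range (n+1) := by
      intro m hm
      rw [Finset.mem_Icc] at hm
      rw [Finset.mem_range]
      have := i.isLt
      omega
    have step1 : (∑ k : Fin (n+1), B i k * T₀ k j)
        = ∑ m ∈ Finset.range (n+1),
            (((i : ℕ).choose m : ℂ) * a ((i : ℕ) - m) * ((m).choose (j : ℕ) : ℂ)) := by
      rw [← Fin.sum_univ_eq_sum_range
        (fun m => ((i : ℕ).choose m : ℂ) * a ((i : ℕ) - m) * ((m).choose (j : ℕ) : ℂ)) (n+1)]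
      refine Finset.sum_congr rfl (fun k _ => ?_)
      show B i k * T₀ k j = _
      rw [hBa i k, hT k j]
    have step2 : (∑ k : Fin (n+1), T₀ i k * B k j)
        = ∑ m ∈ Finset.range (n+1),
            (((i : ℕ).choose m : ℂ) * (((m).choose (j : ℕ) : ℂ) * a (m - (j : ℕ)))) := by
      rw [← Fin.sum_univ_eq_sum_range
        (fun m => ((i : ℕ).choose m : ℂ) * (((m).choose (j : ℕ) : ℂ) * a (m - (j : ℕ)))) (n+1)]
      refine Finset.sum_congr rfl (fun k _ => ?_)
      show T₀ i k * B k j = _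
      rw [hBa k j, hT i k]
    have hz1 : ∀ m ∈ Finset.range (n+1), m ∉ Finset.Icc (j : ℕ) (i : ℕ) →
        ((i : ℕ).choose m : ℂ) * a ((i : ℕ) - m) * ((m).choose (j : ℕ) : ℂ) = 0 := by
      intro m _ hm
      rw [Finset.mem_Icc] at hm
      push_neg at hm
      rcases lt_or_ge m ((j : ℕ)) with h | h
      · rw [Nat.choose_eq_zero_of_lt h, Nat.cast_zero, mul_zero]
      · rw [Nat.choose_eq_zero_of_lt (hm h), Nat.cast_zero, zero_mul, zero_mul]
    have hz2 : ∀ m ∈ Finset.range (n+1), m ∉ Finset.Icc (j : ℕ) (i : ℕ) →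
        ((i : ℕ).choose m : ℂ) * (((m).choose (j : ℕ) : ℂ) * a (m - (j : ℕ))) = 0 := by
      intro m _ hm
      rw [Finset.mem_Icc] at hm
      push_neg at hm
      rcases lt_or_ge m ((j : ℕ)) with h | h
      · rw [Nat.choose_eq_zero_of_lt h, Nat.cast_zero, zero_mul, mul_zero]
      · rw [Nat.choose_eq_zero_of_lt (hm h), Nat.cast_zero, zero_mul]
    rw [step1, step2, ← Finset.sum_subset hsubset hz1, ← Finset.sum_subset hsubset hz2]
    exact key_sum a (i : ℕ) (j : ℕ)
  -- C := A - B is zero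
  have hABT : (A - B) * T₀ = T₀ * (A - B) := by
    rw [sub_mul, Matrix.mul_sub, hAdef, hAT, hBT]
  have hC0 : ∀ m : Fin (n+1), (A - B) m ⟨0, Nat.succ_pos n⟩ = 0 := by
    intro m
    rw [Matrix.sub_apply, hBa m ⟨0, Nat.succ_pos n⟩]
    have h0 : ((⟨0, Nat.succ_pos n⟩ : Fin (n+1)) : ℕ) = 0 := rfl
    rw [h0, Nat.choose_zero_right, Nat.cast_one, one_mul, Nat.sub_zero]
    simp only [hadef]
    rw [dif_pos m.isLt]
    have : (⟨(m : ℕ), m.isLt⟩ : Fin (n+1)) = m := Fin.eta m m.isLt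
    rw [this, sub_self]
  have hNTc : SLow (T₀ - 1) := sub_one_slow hTl hTd
  have hcomm : ∀ k : ℕ, (A - B) * (T₀ - 1) ^ k = (T₀ - 1) ^ k * (A - B) := by
    intro k
    have hc : Commute (A - B) T₀ := hABT
    have h : Commute (T₀ - 1) (A - B) := Commute.sub_left hc.symm (Commute.one_left _)
    exact ((h.pow_left k).eq).symm
  set Wc : Matrix (Fin (n+1)) (Fin (n+1)) ℂ := colV T₀ with hWcdef
  have hCW : (A - B) * Wc = 0 := by
    ext i k
    have e1 : ((A - B) * Wc) i k = ((A - B) * (T₀ - 1) ^ (k : ℕ)) i ⟨0, Nat.succ_pos n⟩ := by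
      simp only [Matrix.mul_apply, hWcdef, colV_apply]
    rw [e1, hcomm (k : ℕ), Matrix.mul_apply]
    have : ∀ m ∈ Finset.univ, ((T₀ - 1) ^ (k : ℕ)) i m * (A - B) m ⟨0, Nat.succ_pos n⟩ = 0 := by
      intro m _
      rw [hC0 m, mul_zero]
    rw [Finset.sum_eq_zero this]
    simp
  have hWcl : Low Wc := colV_low hNTc
  have hWcd : ∀ k, Wc k k = (Nat.factorial (k : ℕ) : ℂ) := colV_diag hNTc (sub_one_subdiag hTs)
  have hWcdet : IsUnit Wc.det := by
    rw [low_det hWcl]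
    apply isUnit_iff_ne_zero.mpr
    apply Finset.prod_ne_zero_iff.mpr
    intro k _
    rw [hWcd k]
    exact_mod_cast Nat.factorial_ne_zero _
  have hAB : A = B := by
    have h0 : A - B = 0 := by
      calc A - B = (A - B) * (Wc * Wc⁻¹) := by
            rw [Matrix.mul_nonsing_inv _ hWcdet, mul_one]
        _ = (A - B) * Wc * Wc⁻¹ := (mul_assoc _ _ _).symm
        _ = 0 := by rw [hCW, Matrix.zero_mul]
    have := sub_eq_zero.mp h0
    exact this
  refine ⟨L, ?_, ?_, ?_, ?_⟩
  · intro i j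
    exact ⟨Lq i j, rfl⟩
  · intro i
    show (f : ℚ → ℂ) (Lq i i) = 1
    rw [hLqd i]
    exact map_one f
  · intro i j h
    show (f : ℚ → ℂ) (Lq i j) = 0
    rw [hLql i j h]
    exact map_zero f
  · intro i j hji
    have h2 := congrFun (congrFun hAB i) j
    rw [hBa i j] at h2
    simp only [hadef] at h2
    rw [dif_pos (lt_of_le_of_lt (Nat.sub_le _ _) i.isLt)] at h2
    exact h2
end
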